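/- arXiv:2107.03241 — 3 statements merged into one kernel-verified Lean document; each statement's English description precedes it below -/
import Mathlib

section
/- Let φ : ℝⁿ → ℝⁿ be twice continuously differentiable and x : ℝ → ℝⁿ twice continuously differentiable, and suppose x'(ξ) = σ(ξ)·e₁ for all ξ with σ(ξ) > 0, where e₁ is the first standard basis vector. Suppose moreover that along the curve the Jacobian of φ maps e₁ to a positive multiple of e₁, i.e. ∂₁φ^{(1)}(x(ξ)) > 0 and ∂₁φ^{(j)}(x(ξ)) = 0 for all j ≥ 2. Set y = φ ∘ x and define g_x(ξ) = −(x'(ξ)·x''(ξ))/‖x'(ξ)‖³ and g_y(ξ) = −(y'(ξ)·y''(ξ))/‖y'(ξ)‖³. Then for every ξ, g_y(ξ) = g_x(ξ)/∂₁φ^{(1)}(x(ξ)) − ∂₁²φ^{(1)}(x(ξ))/(∂₁φ^{(1)}(x(ξ)))². -/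
/-- Simplified scalar recursion for the SRB density gradient along straight
unstable manifolds aligned with the first coordinate axis:
`g_y = g_x / ∂₁φ⁽¹⁾ − ∂₁²φ⁽¹⁾/(∂₁φ⁽¹⁾)²`. -/
theorem stmt4 {n : ℕ}
    (φ : EuclideanSpace ℝ (Fin (n+1)) → EuclideanSpace ℝ (Fin (n+1)))
    (x : ℝ → EuclideanSpace ℝ (Fin (n+1))) (σ : ℝ → ℝ)
    (hφ : ContDiff ℝ 2 φ) (hx : ContDiff ℝ 2 x)
    (hσ : ∀ ξ : ℝ, 0 < σ ξ)
    (hstraight : ∀ ξ : ℝ, deriv x ξ = σ ξ • EuclideanSpace.single 0 1)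
    (hpos : ∀ ξ : ℝ, 0 < fderiv ℝ φ (x ξ) (EuclideanSpace.single 0 1) 0)
    (hzero : ∀ ξ : ℝ, ∀ j : Fin (n+1), j ≠ 0 →
      fderiv ℝ φ (x ξ) (EuclideanSpace.single 0 1) j = 0)
    (y : ℝ → EuclideanSpace ℝ (Fin (n+1))) (hy : y = φ ∘ x)
    (gx gy : ℝ → ℝ)
    (hgx : ∀ ξ : ℝ, gx ξ
      = -((inner ℝ (deriv x ξ) (deriv (deriv x) ξ) : ℝ) / ‖deriv x ξ‖ ^ 3))
    (hgy : ∀ ξ : ℝ, gy ξ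
      = -((inner ℝ (deriv y ξ) (deriv (deriv y) ξ) : ℝ) / ‖deriv y ξ‖ ^ 3))
    (ξ : ℝ) :
    gy ξ = gx ξ / fderiv ℝ φ (x ξ) (EuclideanSpace.single 0 1) 0
      - fderiv ℝ (fderiv ℝ φ) (x ξ) (EuclideanSpace.single 0 1)
            (EuclideanSpace.single 0 1) 0
        / (fderiv ℝ φ (x ξ) (EuclideanSpace.single 0 1) 0) ^ 2 := by
  have h2 : (2 : WithTop ℕ∞) = 1 + 1 := by norm_num
  have h12 : (1 : WithTop ℕ∞) ≤ 2 := by norm_num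
  have hxd : Differentiable ℝ x := hx.differentiable (by norm_num)
  have hφd : Differentiable ℝ φ := hφ.differentiable (by norm_num)
  have hdx : ContDiff ℝ 1 (deriv x) := by
    rw [h2] at hx; exact (contDiff_succ_iff_deriv.mp hx).2.2
  have hyc : ContDiff ℝ 2 y := by rw [hy]; exact hφ.comp hx
  have hdy : ContDiff ℝ 1 (deriv y) := by
    rw [h2] at hyc; exact (contDiff_succ_iff_deriv.mp hyc).2.2
  have hDφ : ContDiff ℝ 1 (fderiv ℝ φ) := hφ.fderiv_right (by norm_num)
  set e : EuclideanSpace ℝ (Fin (n+1)) := EuclideanSpace.single 0 1 with he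
  set α : ℝ → ℝ := fun t => fderiv ℝ φ (x t) e 0 with hα
  set b : ℝ := fderiv ℝ (fderiv ℝ φ) (x ξ) e e 0 with hb
  have he0 : e 0 = 1 := by simp [he, EuclideanSpace.single_apply]
  have hσfun : σ = fun t => deriv x t 0 := by
    funext t; rw [hstraight t]; simp [he, EuclideanSpace.single_apply]
  have hσdiff : Differentiable ℝ σ := by
    rw [hσfun]
    exact (EuclideanSpace.proj (0 : Fin (n+1))).differentiable.comp
      (hdx.differentiable one_ne_zero)
  have hAe : ∀ t, fderiv ℝ φ (x t) e = α t • e := by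
    intro t
    ext j
    rcases eq_or_ne j 0 with hj | hj
    · subst hj; simp [hα, he0]
    · have h0 := hzero t j hj; rw [he] at h0
      simp [h0, he, EuclideanSpace.single_apply, hj, hα]
  have hy' : ∀ t, deriv y t = (σ t * α t) • e := by
    intro t
    rw [hy, fderiv_comp_deriv t (hφd (x t)) (hxd t), hstraight t, map_smul,
      hAe t, smul_smul]
  -- derivative of α at ξ
  have hα' : HasDerivAt α (σ ξ * b) ξ := by
    have hD : HasFDerivAt (fderiv ℝ φ) (fderiv ℝ (fderiv ℝ φ) (x ξ)) (x ξ) :=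
      (hDφ.differentiable one_ne_zero (x ξ)).hasFDerivAt
    have hc : HasDerivAt (fun t => fderiv ℝ φ (x t))
        (fderiv ℝ (fderiv ℝ φ) (x ξ) (deriv x ξ)) ξ :=
      hD.comp_hasDerivAt ξ (hxd ξ).hasDerivAt
    have happ : HasDerivAt (fun t => fderiv ℝ φ (x t) e)
        (fderiv ℝ (fderiv ℝ φ) (x ξ) (deriv x ξ) e) ξ := by
      simpa using hc.clm_apply (hasDerivAt_const ξ e)
    have hproj := (EuclideanSpace.proj (0 : Fin (n+1))).hasFDerivAt.comp_hasDerivAt ξ happ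
    have heq : fderiv ℝ (fderiv ℝ φ) (x ξ) (deriv x ξ) e 0 = σ ξ * b := by
      rw [hstraight ξ, map_smul, hb]
      simp
    have hproj' : HasDerivAt α (fderiv ℝ (fderiv ℝ φ) (x ξ) (deriv x ξ) e 0) ξ := hproj
    rwa [heq] at hproj'
  have hσhas : HasDerivAt σ (deriv σ ξ) ξ := (hσdiff ξ).hasDerivAt
  have hmul : HasDerivAt (fun t => σ t * α t)
      (deriv σ ξ * α ξ + σ ξ * (σ ξ * b)) ξ := hσhas.mul hα'
  -- second derivative components
  have hkey_y : (deriv (deriv y) ξ) 0 = deriv σ ξ * α ξ + σ ξ * (σ ξ * b) := by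
    have hproj : HasDerivAt (fun t => deriv y t 0) ((deriv (deriv y) ξ) 0) ξ := by
      exact (EuclideanSpace.proj (0 : Fin (n+1))).hasFDerivAt.comp_hasDerivAt ξ
        ((hdy.differentiable one_ne_zero ξ).hasDerivAt)
    have hfun : (fun t => deriv y t 0) = fun t => σ t * α t := by
      funext t; rw [hy' t]; simp [he0]
    rw [hfun] at hproj
    exact hproj.unique hmul
  have hkey_x : (deriv (deriv x) ξ) 0 = deriv σ ξ := by
    have hproj : HasDerivAt (fun t => deriv x t 0) ((deriv (deriv x) ξ) 0) ξ := by
      exact (EuclideanSpace.proj (0 : Fin (n+1))).hasFDerivAt.comp_hasDerivAt ξ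
        ((hdx.differentiable one_ne_zero ξ).hasDerivAt)
    have hfun : (fun t => deriv x t 0) = σ := hσfun.symm
    rw [hfun] at hproj
    exact hproj.unique hσhas
  -- inner products
  have hinx : (inner ℝ (deriv x ξ) (deriv (deriv x) ξ) : ℝ) = σ ξ * deriv σ ξ := by
    rw [hstraight ξ, real_inner_smul_left, he, EuclideanSpace.inner_single_left]
    simp [← he, hkey_x]
  have hiny : (inner ℝ (deriv y ξ) (deriv (deriv y) ξ) : ℝ)
      = (σ ξ * α ξ) * (deriv σ ξ * α ξ + σ ξ * (σ ξ * b)) := by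
    rw [hy' ξ, real_inner_smul_left, he, EuclideanSpace.inner_single_left]
    simp [← he, hkey_y]
  -- norms
  have hnx : ‖deriv x ξ‖ = σ ξ := by
    rw [hstraight ξ, norm_smul, he, EuclideanSpace.norm_single]
    simp [abs_of_pos (hσ ξ)]
  have hαpos : 0 < α ξ := hpos ξ
  have hny : ‖deriv y ξ‖ = σ ξ * α ξ := by
    rw [hy' ξ, norm_smul, he, EuclideanSpace.norm_single]
    simp [abs_mul, abs_of_pos (hσ ξ), abs_of_pos hαpos]
  have hσ0 : σ ξ ≠ 0 := (hσ ξ).ne'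
  have hα0 : α ξ ≠ 0 := hαpos.ne'
  rw [hgy ξ, hgx ξ, hinx, hiny, hnx, hny]
  change _ = _ / α ξ - b / α ξ ^ 2
  field_simp
  ring
end

section
/- Let m ≤ n, let x : ℝᵐ → ℝⁿ be twice continuously differentiable with Jacobian ∇x(ξ) of rank m for every ξ, and let ρ : ℝⁿ → ℝ be continuously differentiable and strictly positive, such that ρ(x(ξ))·√(det G(ξ)) = 1 for all ξ, where G(ξ) = ∇x(ξ)ᵀ∇x(ξ). Then for every ξ and every i ∈ {1,…,m}, ∂_{ξᵢ}( log ρ(x(ξ)) ) = −tr( G(ξ)^{−1} · ∇x(ξ)ᵀ · ∂_{ξᵢ}∇x(ξ) ). -/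
open Matrix

noncomputable def detCML (m : ℕ) : ContinuousMultilinearMap ℝ (fun _ : Fin m => (Fin m → ℝ)) ℝ :=
  { toMultilinearMap := (Matrix.detRowAlternating : (Fin m → ℝ) [⋀^Fin m]→ₗ[ℝ] ℝ).toMultilinearMap
    cont := by
      have : Continuous fun v : Fin m → Fin m → ℝ => Matrix.det (Matrix.of v) :=
        Continuous.matrix_det (by continuity)
      exact this }

lemma detCML_apply {m : ℕ} (v : Fin m → Fin m → ℝ) : detCML m v = Matrix.det (Matrix.of v) := rfl

lemma sum_det_updateRow {m : ℕ} (A H : Matrix (Fin m) (Fin m) ℝ) :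
    ∑ k, (A.updateRow k (H k)).det = (H * A.adjugate).trace := by
  have h1 : ∀ k, (A.updateRow k (H k)).det = ∑ j, H k j * A.adjugate j k := by
    intro k
    have hH : (H k : Fin m → ℝ) = ∑ j, H k j • (Pi.single j 1 : Fin m → ℝ) := by
      funext l
      simp [Pi.single_apply, Finset.sum_apply]
    have h2 : cramer Aᵀ (H k) = ∑ j, H k j • cramer Aᵀ (Pi.single j 1) := by
      conv_lhs => rw [hH]
      rw [map_sum]
      exact Finset.sum_congr rfl fun j _ => LinearMap.map_smul _ _ _
    rw [← cramer_transpose_apply, h2]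
    simp only [Finset.sum_apply, Pi.smul_apply, smul_eq_mul]
    refine Finset.sum_congr rfl fun j _ => ?_
    rw [cramer_transpose_apply, ← adjugate_apply]
  simp only [h1, Matrix.trace, Matrix.diag, Matrix.mul_apply]

lemma posdef_of_rank {m n : ℕ} (A : Matrix (Fin n) (Fin m) ℝ) (h : A.rank = m) :
    (Aᵀ * A).PosDef := by
  have hinj : Function.Injective A.mulVecLin := by
    have h1 := A.mulVecLin.finrank_range_add_finrank_ker
    rw [show Module.finrank ℝ (LinearMap.range A.mulVecLin) = m from h,
      Module.finrank_fin_fun] at h1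
    have hker : LinearMap.ker A.mulVecLin = ⊥ :=
      Submodule.finrank_eq_zero.mp (by omega)
    exact LinearMap.ker_eq_bot.mp hker
  refine Matrix.posDef_iff_dotProduct_mulVec.mpr ⟨?_, ?_⟩
  · show (Aᵀ * A)ᴴ = _
    have : (Aᵀ * A)ᵀ = Aᵀ * A := by
      rw [Matrix.transpose_mul, Matrix.transpose_transpose]
    ext k l
    simp only [Matrix.conjTranspose_apply, star_trivial]
    exact congrFun (congrFun this.symm l) k |>.symm ▸ (congrFun (congrFun this l) k)
  · intro y hy
    have hw : A *ᵥ y ≠ 0 := by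
      intro hcon
      apply hy
      have := hinj (a₁ := y) (a₂ := 0) (by simpa [Matrix.mulVecLin_apply] using hcon)
      simpa using this
    have hdot : star y ⬝ᵥ ((Aᵀ * A) *ᵥ y) = (A *ᵥ y) ⬝ᵥ (A *ᵥ y) := by
      rw [star_trivial, ← Matrix.mulVec_mulVec, Matrix.dotProduct_mulVec,
        Matrix.vecMul_transpose]
    rw [hdot]
    rcases lt_or_eq_of_le (Finset.sum_nonneg fun i _ => mul_self_nonneg ((A *ᵥ y) i)) with hlt | heq
    · exact hlt
    · exact absurd (dotProduct_self_eq_zero.mp heq.symm) hw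

section aux

variable {m n : ℕ} (x : EuclideanSpace ℝ (Fin m) → EuclideanSpace ℝ (Fin n))

noncomputable def entf (a : Fin n) (j : Fin m) : EuclideanSpace ℝ (Fin m) → ℝ :=
  fun η => fderiv ℝ x η (EuclideanSpace.single j 1) a

noncomputable def Dent (ξ : EuclideanSpace ℝ (Fin m)) (a : Fin n) (j : Fin m) :
    EuclideanSpace ℝ (Fin m) →L[ℝ] ℝ :=
  fderiv ℝ (entf x a j) ξ

noncomputable def rowf (k : Fin m) : EuclideanSpace ℝ (Fin m) → (Fin m → ℝ) :=
  fun η l => ∑ a, entf x a k η * entf x a l η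

noncomputable def rowf' (ξ : EuclideanSpace ℝ (Fin m)) (k : Fin m) :
    EuclideanSpace ℝ (Fin m) →L[ℝ] (Fin m → ℝ) :=
  ContinuousLinearMap.pi fun l =>
    ∑ a, (entf x a k ξ • Dent x ξ a l + entf x a l ξ • Dent x ξ a k)

variable {x}

lemma entf_eq (a : Fin n) (j : Fin m) :
    entf x a j = fun η => fderiv ℝ x η (EuclideanSpace.single j 1) a := rfl

lemma entf_diff (hx : ContDiff ℝ 2 x) (a : Fin n) (j : Fin m) :
    Differentiable ℝ (entf x a j) := by
  have h0 : Differentiable ℝ (fderiv ℝ x) :=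
    (hx.fderiv_right (m := 1) (by norm_num)).differentiable (by norm_num)
  have h1 : Differentiable ℝ (fun η => fderiv ℝ x η (EuclideanSpace.single j 1)) :=
    fun η => (h0 η).clm_apply (differentiableAt_const _)
  have h2 : entf x a j
      = (EuclideanSpace.proj (𝕜 := ℝ) a) ∘ (fun η => fderiv ℝ x η (EuclideanSpace.single j 1)) :=
    rfl
  rw [h2]
  exact fun η => ((EuclideanSpace.proj a).differentiableAt).comp η (h1 η)

lemma hasFDerivAt_entf (hx : ContDiff ℝ 2 x) (ξ : EuclideanSpace ℝ (Fin m))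
    (a : Fin n) (j : Fin m) : HasFDerivAt (entf x a j) (Dent x ξ a j) ξ :=
  ((entf_diff hx a j) ξ).hasFDerivAt

lemma hasFDerivAt_rowf (hx : ContDiff ℝ 2 x) (ξ : EuclideanSpace ℝ (Fin m)) (k : Fin m) :
    HasFDerivAt (rowf x k) (rowf' x ξ k) ξ := by
  apply hasFDerivAt_pi''
  intro l
  rw [rowf', ContinuousLinearMap.proj_pi]
  exact HasFDerivAt.fun_sum fun a _ =>
    (hasFDerivAt_entf hx ξ a k).mul (hasFDerivAt_entf hx ξ a l)

lemma hasFDerivAt_detG (hx : ContDiff ℝ 2 x) (ξ : EuclideanSpace ℝ (Fin m)) :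
    HasFDerivAt (fun η => detCML m fun k => rowf x k η)
      (∑ k, ((detCML m).toContinuousLinearMap (fun j => rowf x j ξ) k).comp (rowf' x ξ k)) ξ :=
  HasFDerivAt.multilinear_comp (detCML m) (hasFDerivAt_rowf hx ξ)

lemma deriv_value (ξ v : EuclideanSpace ℝ (Fin m)) :
    (∑ k, ((detCML m).toContinuousLinearMap (fun j => rowf x j ξ) k).comp (rowf' x ξ k)) v
      = ((Matrix.of fun k => rowf' x ξ k v) * (Matrix.of fun k => rowf x k ξ).adjugate).trace := by
  rw [← sum_det_updateRow]
  simp only [ContinuousLinearMap.sum_apply, ContinuousLinearMap.comp_apply]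
  rfl

end aux


/-- General formula for the SRB density gradient on an `m`-dimensional unstable
manifold: differentiating the density-conservation identity
`ρ(x(ξ))√(det G(ξ)) = 1` yields
`∂ᵢ log ρ(x(ξ)) = −tr(G(ξ)⁻¹ ∇x(ξ)ᵀ ∂ᵢ∇x(ξ))`, where `G = ∇xᵀ∇x`. -/
theorem stmt8 {m n : ℕ} (hmn : m ≤ n)
    (x : EuclideanSpace ℝ (Fin m) → EuclideanSpace ℝ (Fin n))
    (ρ : EuclideanSpace ℝ (Fin n) → ℝ)
    (hx : ContDiff ℝ 2 x) (hρ : ContDiff ℝ 1 ρ) (hρpos : ∀ p, 0 < ρ p)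
    (J : EuclideanSpace ℝ (Fin m) → Matrix (Fin n) (Fin m) ℝ)
    (hJ : ∀ ξ a j, J ξ a j = fderiv ℝ x ξ (EuclideanSpace.single j 1) a)
    (hrank : ∀ ξ, (J ξ).rank = m)
    (hdens : ∀ ξ, ρ (x ξ) * Real.sqrt ((((J ξ)ᵀ) * J ξ).det) = 1)
    (J' : Fin m → EuclideanSpace ℝ (Fin m) → Matrix (Fin n) (Fin m) ℝ)
    (hJ' : ∀ i ξ a j, J' i ξ a j
      = fderiv ℝ (fun η => fderiv ℝ x η (EuclideanSpace.single j 1) a) ξ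
          (EuclideanSpace.single i 1))
    (ξ : EuclideanSpace ℝ (Fin m)) (i : Fin m) :
    fderiv ℝ (fun η => Real.log (ρ (x η))) ξ (EuclideanSpace.single i 1)
      = - Matrix.trace (((((J ξ)ᵀ) * J ξ)⁻¹ * ((J ξ)ᵀ)) * J' i ξ) := by
  classical
  have hPD : ∀ η, ((J η)ᵀ * J η).PosDef := fun η => posdef_of_rank _ (hrank η)
  have hGrow : ∀ η, (Matrix.of fun k => rowf x k η) = (J η)ᵀ * J η := by
    intro η
    ext k l
    simp only [Matrix.of_apply, rowf, Matrix.mul_apply, Matrix.transpose_apply]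
    exact Finset.sum_congr rfl fun a _ => by rw [hJ, hJ]; rfl
  have hg : ∀ η, detCML m (fun k => rowf x k η) = ((J η)ᵀ * J η).det := by
    intro η
    rw [detCML_apply, hGrow η]
  have key : (fun η => Real.log (ρ (x η)))
      = fun η => -(2⁻¹ : ℝ) * Real.log (detCML m fun k => rowf x k η) := by
    funext η
    have hdet : 0 < ((J η)ᵀ * J η).det := (hPD η).det_pos
    have hρ' := (hρpos (x η)).ne'
    have hs : Real.sqrt (((J η)ᵀ * J η).det) ≠ 0 := (Real.sqrt_pos.mpr hdet).ne'
    have hlog : Real.log (ρ (x η)) + Real.log (Real.sqrt (((J η)ᵀ * J η).det)) = 0 := by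
      rw [← Real.log_mul hρ' hs, hdens η, Real.log_one]
    rw [Real.log_sqrt hdet.le] at hlog
    rw [hg η]
    linarith
  have hdetne : detCML m (fun k => rowf x k ξ) ≠ 0 := by
    rw [hg ξ]; exact (hPD ξ).det_pos.ne'
  have h1 := hasFDerivAt_detG (x := x) hx ξ
  have h2 := (h1.log hdetne).const_mul (-(2⁻¹ : ℝ))
  rw [key, h2.fderiv, ContinuousLinearMap.smul_apply, ContinuousLinearMap.smul_apply,
    deriv_value]
  have hH : (Matrix.of fun k => rowf' x ξ k (EuclideanSpace.single i 1))
      = (J' i ξ)ᵀ * J ξ + (J ξ)ᵀ * J' i ξ := by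
    ext k l
    simp only [Matrix.of_apply, rowf', ContinuousLinearMap.pi_apply,
      ContinuousLinearMap.sum_apply, ContinuousLinearMap.add_apply,
      ContinuousLinearMap.smul_apply, smul_eq_mul, Matrix.add_apply, Matrix.mul_apply,
      Matrix.transpose_apply, Finset.sum_apply]
    rw [← Finset.sum_add_distrib]
    refine Finset.sum_congr rfl fun a _ => ?_
    simp only [Dent, entf_eq]
    rw [← hJ, ← hJ, ← hJ', ← hJ']
    ring
  have hadj : ((J ξ)ᵀ * J ξ).adjugate = ((J ξ)ᵀ * J ξ).det • ((J ξ)ᵀ * J ξ)⁻¹ := by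
    rw [Matrix.inv_def, smul_smul, Ring.inverse_eq_inv,
      mul_inv_cancel₀ (hPD ξ).det_pos.ne', one_smul]
  rw [hGrow ξ, hH, hadj, Matrix.mul_smul, Matrix.trace_smul, Matrix.add_mul, Matrix.trace_add]
  have hGt : ((J ξ)ᵀ * J ξ)ᵀ = (J ξ)ᵀ * J ξ := by
    rw [Matrix.transpose_mul, Matrix.transpose_transpose]
  have hsym : Matrix.trace (((J' i ξ)ᵀ * J ξ) * ((J ξ)ᵀ * J ξ)⁻¹)
      = Matrix.trace (((J ξ)ᵀ * J' i ξ) * ((J ξ)ᵀ * J ξ)⁻¹) := by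
    calc Matrix.trace (((J' i ξ)ᵀ * J ξ) * ((J ξ)ᵀ * J ξ)⁻¹)
        = Matrix.trace ((((J' i ξ)ᵀ * J ξ) * ((J ξ)ᵀ * J ξ)⁻¹)ᵀ) :=
          (Matrix.trace_transpose _).symm
      _ = Matrix.trace ((((J ξ)ᵀ * J ξ)⁻¹)ᵀ * ((J' i ξ)ᵀ * J ξ)ᵀ) := by
          rw [Matrix.transpose_mul]
      _ = Matrix.trace (((J ξ)ᵀ * J ξ)⁻¹ * ((J ξ)ᵀ * J' i ξ)) := by
          rw [Matrix.transpose_nonsing_inv, hGt, Matrix.transpose_mul,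
            Matrix.transpose_transpose]
      _ = Matrix.trace (((J ξ)ᵀ * J' i ξ) * ((J ξ)ᵀ * J ξ)⁻¹) :=
          Matrix.trace_mul_comm _ _
  have ht2 : Matrix.trace (((J ξ)ᵀ * J' i ξ) * ((J ξ)ᵀ * J ξ)⁻¹)
      = Matrix.trace ((((J ξ)ᵀ * J ξ)⁻¹ * (J ξ)ᵀ) * J' i ξ) := by
    rw [Matrix.trace_mul_comm, Matrix.mul_assoc]
  rw [hsym, ht2, hg ξ, smul_eq_mul]
  have hd := (hPD ξ).det_pos.ne'
  rw [smul_eq_mul, smul_eq_mul, inv_mul_cancel_left₀ hd]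
  ring
end

section
/- Let m ≤ n, let x : ℝᵐ → ℝⁿ be twice continuously differentiable with Jacobian ∇x(ξ) of rank m for every ξ, and let ρ : ℝⁿ → ℝ be continuously differentiable and strictly positive, such that ρ(x(ξ))·√(det(∇x(ξ)ᵀ∇x(ξ))) = 1 for all ξ. Suppose that at ξ = 0 the columns of Q := ∇x(0) are orthonormal, i.e. QᵀQ = I_m. Then for every i ∈ {1,…,m}, ∂_{ξᵢ}( log ρ(x(ξ)) ) evaluated at ξ = 0 equals −∑_{j=1}^{m} Q^{(:j)} · ∂_{ξᵢ}∂_{ξⱼ}x(0), where Q^{(:j)} denotes the j-th column of Q and · the Euclidean inner product in ℝⁿ. -/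
open Matrix

/-- Simplified expression for the SRB density gradient at a point where the
chart of the `m`-dimensional unstable manifold is orthonormalized: if the
columns of `Q = ∇x(0)` are orthonormal, then
`∂ᵢ log ρ(x(ξ))|_{ξ=0} = −∑ⱼ Q⁽:ʲ⁾ · ∂ᵢ∂ⱼx(0)`. -/
theorem stmt9 {m n : ℕ} (hmn : m ≤ n)
    (x : EuclideanSpace ℝ (Fin m) → EuclideanSpace ℝ (Fin n))
    (ρ : EuclideanSpace ℝ (Fin n) → ℝ)
    (hx : ContDiff ℝ 2 x) (hρ : ContDiff ℝ 1 ρ) (hρpos : ∀ p, 0 < ρ p)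
    (J : EuclideanSpace ℝ (Fin m) → Matrix (Fin n) (Fin m) ℝ)
    (hJ : ∀ ξ a j, J ξ a j = fderiv ℝ x ξ (EuclideanSpace.single j 1) a)
    (hrank : ∀ ξ, (J ξ).rank = m)
    (hdens : ∀ ξ, ρ (x ξ) * Real.sqrt ((((J ξ)ᵀ) * J ξ).det) = 1)
    (horth : ((J 0)ᵀ) * J 0 = 1)
    (i : Fin m) :
    fderiv ℝ (fun η => Real.log (ρ (x η))) 0 (EuclideanSpace.single i 1)
      = - ∑ j : Fin m, ∑ b : Fin n, J 0 b j *
          fderiv ℝ (fun η => fderiv ℝ x η (EuclideanSpace.single j 1) b) 0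
            (EuclideanSpace.single i 1) := by
  classical
  set v : EuclideanSpace ℝ (Fin m) := EuclideanSpace.single i 1 with hv
  -- the entries of the Jacobian are C¹
  have hJeC : ∀ (c : Fin n) (a : Fin m),
      ContDiff ℝ 1 (fun ξ => fderiv ℝ x ξ (EuclideanSpace.single a 1) c) := by
    intro c a
    have h1 : ContDiff ℝ 1 (fderiv ℝ x) := hx.fderiv_right (by norm_num)
    have h2 : ContDiff ℝ 1 (fun ξ => fderiv ℝ x ξ (EuclideanSpace.single a 1)) :=
      h1.clm_apply contDiff_const
    exact (EuclideanSpace.proj c : EuclideanSpace ℝ (Fin n) →L[ℝ] ℝ).contDiff.comp h2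
  set D : Fin n → Fin m → (EuclideanSpace ℝ (Fin m) →L[ℝ] ℝ) :=
    fun c a => fderiv ℝ (fun ξ => fderiv ℝ x ξ (EuclideanSpace.single a 1) c) 0 with hDdef
  have hD : ∀ (c : Fin n) (a : Fin m),
      HasFDerivAt (fun ξ => fderiv ℝ x ξ (EuclideanSpace.single a 1) c) (D c a) 0 :=
    fun c a => ((hJeC c a).differentiable one_ne_zero 0).hasFDerivAt
  -- entries of the Gram matrix, and their derivatives
  set g : Fin m → Fin m → EuclideanSpace ℝ (Fin m) → ℝ :=
    fun a b ξ => ∑ c, (fderiv ℝ x ξ (EuclideanSpace.single a 1) c) *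
      (fderiv ℝ x ξ (EuclideanSpace.single b 1) c) with hgdef
  set Lg : Fin m → Fin m → (EuclideanSpace ℝ (Fin m) →L[ℝ] ℝ) :=
    fun a b => ∑ c, ((fderiv ℝ x 0 (EuclideanSpace.single a 1) c) • D c b
      + (fderiv ℝ x 0 (EuclideanSpace.single b 1) c) • D c a) with hLgdef
  have hg : ∀ a b, HasFDerivAt (g a b) (Lg a b) 0 := by
    intro a b
    exact HasFDerivAt.fun_sum (fun c _ => (hD c a).mul (hD c b))
  have hGg : ∀ ξ (a b : Fin m), (((J ξ)ᵀ) * J ξ) a b = g a b ξ := by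
    intro ξ a b
    simp only [Matrix.mul_apply, Matrix.transpose_apply, hgdef, hJ]
  have hg0 : ∀ a b, g a b 0 = if a = b then 1 else 0 := by
    intro a b
    rw [← hGg, horth, Matrix.one_apply]
  -- the Gram determinant as a function
  set d : EuclideanSpace ℝ (Fin m) → ℝ := fun ξ => (((J ξ)ᵀ) * J ξ).det with hddef
  have hdeq : d = fun ξ => ∑ σ : Equiv.Perm (Fin m),
      ((Equiv.Perm.sign σ : ℤ) : ℝ) * ∏ k, g (σ k) k ξ := by
    funext ξ
    simp only [hddef]
    rw [Matrix.det_apply']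
    refine Finset.sum_congr rfl fun σ _ => ?_
    congr 1
    exact Finset.prod_congr rfl fun k _ => hGg ξ (σ k) k
  have hd0 : d 0 = 1 := by
    simp only [hddef]
    rw [horth, Matrix.det_one]
  -- derivative of the Gram determinant at 0
  set Φ : EuclideanSpace ℝ (Fin m) →L[ℝ] ℝ :=
    ∑ σ : Equiv.Perm (Fin m), ((Equiv.Perm.sign σ : ℤ) : ℝ) •
      ∑ k, (∏ l ∈ Finset.univ.erase k, g (σ l) l 0) • Lg (σ k) k with hΦdef
  have hdF : HasFDerivAt d Φ 0 := by
    rw [hdeq]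
    exact HasFDerivAt.fun_sum (fun σ _ =>
      (HasFDerivAt.finset_prod (fun k _ => hg (σ k) k)).const_mul _)
  -- at the identity only σ = 1 contributes, giving the trace
  have hΦv : Φ v = ∑ k, Lg k k v := by
    rw [hΦdef, ContinuousLinearMap.sum_apply]
    rw [Finset.sum_eq_single (1 : Equiv.Perm (Fin m))]
    · have h1 : ∀ l : Fin m, g ((1 : Equiv.Perm (Fin m)) l) l 0 = 1 := by
        intro l; rw [Equiv.Perm.one_apply, hg0]; exact if_pos rfl
      have h2 : ∀ l : Fin m, g l l 0 = 1 := by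
        intro l; rw [hg0]; exact if_pos rfl
      simp [h1, h2, ContinuousLinearMap.sum_apply]
    · intro σ _ hσ
      have hz : ∀ k : Fin m, ∏ l ∈ Finset.univ.erase k, g (σ l) l 0 = 0 := by
        intro k
        obtain ⟨a, ha⟩ : ∃ a, σ a ≠ a := by
          by_contra h
          push_neg at h
          exact hσ (Equiv.ext h)
        by_cases hak : a = k
        · have hb : σ (σ a) ≠ σ a := fun h => ha (σ.injective h)
          have hmem : σ a ∈ Finset.univ.erase k :=
            Finset.mem_erase.mpr ⟨by rw [← hak]; exact ha, Finset.mem_univ _⟩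
          refine Finset.prod_eq_zero hmem ?_
          rw [hg0]; exact if_neg hb
        · have hmem : a ∈ Finset.univ.erase k :=
            Finset.mem_erase.mpr ⟨hak, Finset.mem_univ _⟩
          refine Finset.prod_eq_zero hmem ?_
          rw [hg0]; exact if_neg ha
      simp [hz]
    · intro h
      exact absurd (Finset.mem_univ _) h
  -- value of the diagonal derivative terms
  have hLgv : ∀ k, Lg k k v = ∑ c, 2 * (J 0 c k * D c k v) := by
    intro k
    rw [hLgdef]
    rw [ContinuousLinearMap.sum_apply]
    refine Finset.sum_congr rfl fun c _ => ?_
    simp only [ContinuousLinearMap.add_apply, ContinuousLinearMap.coe_smul',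
      Pi.smul_apply, smul_eq_mul, ← hJ]
    ring
  -- rewrite the function whose derivative we take
  have hfun : (fun η => Real.log (ρ (x η))) = fun η => (-(2⁻¹ : ℝ)) * Real.log (d η) := by
    funext η
    have h1 : ρ (x η) * Real.sqrt (d η) = 1 := hdens η
    have hρη := hρpos (x η)
    have hs : Real.sqrt (d η) = (ρ (x η))⁻¹ := (inv_eq_of_mul_eq_one_right h1).symm
    have hdpos : 0 < d η := by
      have h2 : 0 < Real.sqrt (d η) := by rw [hs]; positivity
      exact Real.sqrt_pos.mp h2
    have hρeq : ρ (x η) = (Real.sqrt (d η))⁻¹ := by rw [hs, inv_inv]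
    rw [hρeq, Real.log_inv, Real.log_sqrt hdpos.le]
    ring
  have hlog : HasFDerivAt (fun η => (-(2⁻¹ : ℝ)) * Real.log (d η))
      ((-(2⁻¹ : ℝ)) • ((d 0)⁻¹ • Φ)) 0 :=
    (hdF.log (by rw [hd0]; norm_num)).const_mul _
  have key : fderiv ℝ (fun η => Real.log (ρ (x η))) 0 = (-(2⁻¹ : ℝ)) • ((d 0)⁻¹ • Φ) := by
    rw [hfun]
    exact hlog.fderiv
  rw [key]
  have hDrw : ∀ (b : Fin n) (j : Fin m),
      fderiv ℝ (fun η => fderiv ℝ x η (EuclideanSpace.single j 1) b) 0 v = D b j v :=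
    fun _ _ => rfl
  simp only [ContinuousLinearMap.smul_apply, smul_eq_mul, hd0, inv_one, one_mul, hΦv, hDrw]
  simp only [hLgv]
  rw [show (∑ k : Fin m, ∑ c : Fin n, 2 * (J 0 c k * D c k v))
      = 2 * ∑ k : Fin m, ∑ c : Fin n, J 0 c k * D c k v by
    rw [Finset.mul_sum]
    exact Finset.sum_congr rfl fun k _ => (Finset.mul_sum _ _ _).symm]
  ring
end
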